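/- Splicing decreases energy on ℝ: given an admissible pair (u, v) whose support has a gap (x₁, x₂) on which the Poisson potential φ is linear with slope φ'_{12}, and translating the right part left by a ∈ (0, x₂−x₁] as in (ū, v̄), the new Poisson potential φ̃ satisfies ∫(φ̃')² = ∫(φ')² − a(φ'_{12})², and if additionally no interface penalization increases (the joined interfaces satisfy the triangle inequality d_{kl} ≤ d_{kj} + d_{jl}), then F₁(ū, v̄) ≤ F₁(u, v), with strict inequality in the H^{-1} term unless φ'_{12} = 0. -/

import Mathlib

open MeasureTheory Set

/-- Splicing decreases energy on `ℝ`.  Let `(u,v)` be admissible with Poisson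
potential `φ` (C¹, `−φ'' = u − v` a.e., `φ' ∈ L²`), vanishing on the gap
`(x₁,x₂)` (where `φ'` is constant `= s`) and on `(x₃,∞)` (where `φ' = 0`).
Translating the right part left by `a ∈ (0, x₂−x₁]` gives the spliced
potential `φ̃` with `∫(φ̃')² = ∫(φ')² − a s²`; if moreover the interfacial
energy does not increase (`Inew ≤ Iold`), then the total energy satisfies
`F₁(ū,v̄) = Inew + ∫(φ̃')² ≤ Iold + ∫(φ')² = F₁(u,v)`, with strict inequality
in the `H^{-1}` term iff `s ≠ 0`. -/
theorem splice_decreases_energy (x₁ x₂ x₃ a s : ℝ)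
    (h12 : x₁ < x₂) (h23 : x₂ < x₃) (ha : 0 < a) (ha' : a ≤ x₂ - x₁)
    (u v φ : ℝ → ℝ)
    (hu01 : ∀ᵐ x : ℝ, u x = 0 ∨ u x = 1) (hv01 : ∀ᵐ x : ℝ, v x = 0 ∨ v x = 1)
    (huv : ∀ᵐ x : ℝ, u x * v x = 0)
    (hφ : ContDiff ℝ 1 φ)
    (hφ'' : ∀ᵐ x : ℝ, deriv (deriv φ) x = v x - u x)
    (hL2 : Integrable (fun x => (deriv φ x) ^ 2))
    (hgap : ∀ x ∈ Set.Ioo x₁ x₂, u x = 0 ∧ v x = 0)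
    (hright : ∀ x ∈ Set.Ioi x₃, u x = 0 ∧ v x = 0)
    (hs : ∀ x ∈ Set.Icc x₁ x₂, deriv φ x = s)
    (h0 : ∀ x ∈ Set.Ici x₃, deriv φ x = 0)
    (φt : ℝ → ℝ)
    (hφt : φt = fun x =>
      if x ≤ x₁ then φ x
      else if x < x₃ - a then φ (x + a) - φ (x₁ + a) + φ x₁
      else φ x₃ - φ (x₁ + a) + φ x₁)
    (Iold Inew : ℝ) (hI : Inew ≤ Iold) :
    (∫ x : ℝ, (deriv φt x) ^ 2 = (∫ x : ℝ, (deriv φ x) ^ 2) - a * s ^ 2) ∧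
    (Inew + ∫ x : ℝ, (deriv φt x) ^ 2 ≤ Iold + ∫ x : ℝ, (deriv φ x) ^ 2) ∧
    ((∫ x : ℝ, (deriv φt x) ^ 2 < ∫ x : ℝ, (deriv φ x) ^ 2) ↔ s ≠ 0) := by
  have hx13 : x₁ < x₃ - a := by linarith
  set f : ℝ → ℝ := fun x => (deriv φ x) ^ 2 with hf
  -- the a.e. derivative of φt
  set D : ℝ → ℝ := fun x =>
    if x ≤ x₁ then deriv φ x else if x ≤ x₃ - a then deriv φ (x + a) else 0 with hD
  -- deriv φt = D off {x₁, x₃ - a}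
  have hderiv : ∀ x : ℝ, x ≠ x₁ → x ≠ x₃ - a → deriv φt x = D x := by
    intro x hne1 hne2
    rcases lt_trichotomy x x₁ with hx | hx | hx
    · have hev : φt =ᶠ[nhds x] φ := by
        filter_upwards [Iio_mem_nhds hx] with y hy
        have hy' : y < x₁ := hy
        simp [hφt, hy'.le]
      rw [hev.deriv_eq]
      simp [hD, le_of_lt hx]
    · exact absurd hx hne1
    · rcases lt_trichotomy x (x₃ - a) with hx3 | hx3 | hx3
      · have hev : φt =ᶠ[nhds x] fun y => φ (y + a) - φ (x₁ + a) + φ x₁ := by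
          filter_upwards [Ioo_mem_nhds hx hx3] with y hy
          simp [hφt, not_le.mpr hy.1, hy.2]
        rw [hev.deriv_eq]
        have : deriv (fun y => φ (y + a) - φ (x₁ + a) + φ x₁) x
            = deriv (fun y => φ (y + a)) x := by
          simp_rw [deriv_add_const, deriv_sub_const]
        rw [this, deriv_comp_add_const]
        simp [hD, not_le.mpr hx, le_of_lt hx3]
      · exact absurd hx3 hne2
      · have hev : φt =ᶠ[nhds x] fun _ => φ x₃ - φ (x₁ + a) + φ x₁ := by
          filter_upwards [Ioi_mem_nhds hx3] with y hy
          have : x₁ < y := lt_trans hx13 hy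
          simp [hφt, not_le.mpr this, not_lt.mpr (le_of_lt (mem_Ioi.mp hy))]
        rw [hev.deriv_eq, deriv_const]
        simp [hD, not_le.mpr (lt_trans hx13 hx3), not_le.mpr hx3]
  have hderiv_ae : (fun x => (deriv φt x) ^ 2) =ᵐ[volume] fun x => D x ^ 2 := by
    have hnull : (volume : Measure ℝ) ({x₁, x₃ - a} : Set ℝ) = 0 :=
      (Set.toFinite _).measure_zero _
    refine (ae_iff.2 ?_)
    refine measure_mono_null ?_ hnull
    intro x hx
    simp only [mem_setOf_eq] at hx
    by_contra hmem
    simp only [mem_insert_iff, mem_singleton_iff, not_or] at hmem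
    exact hx (by rw [hderiv x hmem.1 hmem.2])
  -- D² as a sum of indicators
  have hDsq : ∀ x : ℝ, D x ^ 2
      = (Iic x₁).indicator f x + (Ioc x₁ (x₃ - a)).indicator (fun y => f (y + a)) x := by
    intro x
    by_cases h1 : x ≤ x₁
    · simp [hD, hf, indicator_apply, mem_Iic, mem_Ioc, h1, not_lt.mpr h1]
    · by_cases h2 : x ≤ x₃ - a
      · simp [hD, hf, indicator_apply, mem_Iic, mem_Ioc, h1, h2, not_le.mp h1]
      · simp [hD, hf, indicator_apply, mem_Iic, mem_Ioc, h1, h2]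
  -- f as a sum of indicators
  have hx2 : x₁ + a ≤ x₂ := by linarith
  have hfsum : ∀ x : ℝ, f x
      = (Iic x₁).indicator f x + (Ioc x₁ (x₁ + a)).indicator f x
        + (Ioc (x₁ + a) x₃).indicator f x + (Ioi x₃).indicator f x := by
    intro x
    by_cases h1 : x ≤ x₁
    · simp [indicator_apply, mem_Iic, mem_Ioc, mem_Ioi, h1, not_lt.mpr h1,
        not_lt.mpr (by linarith : x ≤ x₁ + a), not_lt.mpr (by linarith : x ≤ x₃)]
    · by_cases h2 : x ≤ x₁ + a
      · simp [indicator_apply, mem_Iic, mem_Ioc, mem_Ioi, h1, h2, not_le.mp h1,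
          not_lt.mpr h2, not_lt.mpr (by linarith : x ≤ x₃)]
      · by_cases h3 : x ≤ x₃
        · simp [indicator_apply, mem_Iic, mem_Ioc, mem_Ioi, h1, h2, h3, not_le.mp h2,
            not_lt.mpr h3]
        · simp [indicator_apply, mem_Iic, mem_Ioc, mem_Ioi, h1, h2, h3, not_le.mp h3]
  -- integrability facts
  have hInt1 : Integrable ((Iic x₁).indicator f) := hL2.indicator measurableSet_Iic
  have hIntT : Integrable (fun y : ℝ => f (y + a)) := hL2.comp_add_right a
  have hInt2 : Integrable ((Ioc x₁ (x₃ - a)).indicator fun y => f (y + a)) :=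
    hIntT.indicator measurableSet_Ioc
  have hInt3 : Integrable ((Ioc x₁ (x₁ + a)).indicator f) := hL2.indicator measurableSet_Ioc
  have hInt4 : Integrable ((Ioc (x₁ + a) x₃).indicator f) := hL2.indicator measurableSet_Ioc
  have hInt5 : Integrable ((Ioi x₃).indicator f) := hL2.indicator measurableSet_Ioi
  -- value of the middle piece
  have hmid : ∫ x in Ioc x₁ (x₁ + a), f x = a * s ^ 2 := by
    have : ∫ x in Ioc x₁ (x₁ + a), f x = ∫ _x in Ioc x₁ (x₁ + a), s ^ 2 := by
      refine setIntegral_congr_fun measurableSet_Ioc fun x hx => ?_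
      have : deriv φ x = s := hs x ⟨le_of_lt hx.1, le_trans hx.2 hx2⟩
      simp [hf, this]
    rw [this, setIntegral_const, measureReal_def, Real.volume_Ioc, smul_eq_mul]
    rw [show x₁ + a - x₁ = a by ring, ENNReal.toReal_ofReal ha.le]
  -- right piece vanishes
  have hright0 : ∫ x in Ioi x₃, f x = 0 := by
    have : ∫ x in Ioi x₃, f x = ∫ _x in Ioi x₃, (0 : ℝ) := by
      refine setIntegral_congr_fun measurableSet_Ioi fun x hx => ?_
      simp [hf, h0 x (mem_Ici.mpr (le_of_lt (mem_Ioi.mp hx)))]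
    simp [this]
  -- translated piece
  have htrans : ∫ x, (Ioc x₁ (x₃ - a)).indicator (fun y => f (y + a)) x
      = ∫ x in Ioc (x₁ + a) x₃, f x := by
    have hiff : ∀ x : ℝ, x ∈ Ioc x₁ (x₃ - a) ↔ x + a ∈ Ioc (x₁ + a) x₃ := by
      intro x
      simp only [mem_Ioc]
      constructor <;> intro h <;> exact ⟨by linarith [h.1], by linarith [h.2]⟩
    have hind : ∀ x : ℝ, (Ioc x₁ (x₃ - a)).indicator (fun y => f (y + a)) x
        = (Ioc (x₁ + a) x₃).indicator f (x + a) := by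
      intro x
      by_cases hm : x ∈ Ioc x₁ (x₃ - a)
      · rw [indicator_of_mem hm, indicator_of_mem ((hiff x).mp hm)]
      · rw [indicator_of_notMem hm, indicator_of_notMem (fun h => hm ((hiff x).mpr h))]
    simp_rw [hind]
    rw [integral_add_right_eq_self ((Ioc (x₁ + a) x₃).indicator f) a,
      integral_indicator measurableSet_Ioc]
  -- compute both integrals
  have hB : ∫ x : ℝ, (deriv φt x) ^ 2
      = (∫ x in Iic x₁, f x) + ∫ x in Ioc (x₁ + a) x₃, f x := by
    rw [integral_congr_ae hderiv_ae]
    simp_rw [hDsq]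
    rw [integral_add hInt1 hInt2, integral_indicator measurableSet_Iic, htrans]
  have hA : ∫ x : ℝ, (deriv φ x) ^ 2
      = (∫ x in Iic x₁, f x) + a * s ^ 2 + (∫ x in Ioc (x₁ + a) x₃, f x) := by
    have : ∫ x : ℝ, f x = ∫ x : ℝ,
        ((Iic x₁).indicator f x + (Ioc x₁ (x₁ + a)).indicator f x
          + (Ioc (x₁ + a) x₃).indicator f x + (Ioi x₃).indicator f x) := by
      exact integral_congr_ae (Filter.Eventually.of_forall hfsum)
    have hInt13 : Integrable (fun x : ℝ => (Iic x₁).indicator f x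
        + (Ioc x₁ (x₁ + a)).indicator f x) := hInt1.add hInt3
    have hInt134 : Integrable (fun x : ℝ => (Iic x₁).indicator f x
        + (Ioc x₁ (x₁ + a)).indicator f x + (Ioc (x₁ + a) x₃).indicator f x) :=
      hInt13.add hInt4
    rw [show (∫ x : ℝ, (deriv φ x) ^ 2) = ∫ x : ℝ, f x from rfl, this,
      integral_add hInt134 hInt5,
      integral_add hInt13 hInt4, integral_add hInt1 hInt3,
      integral_indicator measurableSet_Iic, integral_indicator measurableSet_Ioc,
      integral_indicator measurableSet_Ioc, integral_indicator measurableSet_Ioi,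
      hmid, hright0]
    ring
  have hmain : ∫ x : ℝ, (deriv φt x) ^ 2 = (∫ x : ℝ, (deriv φ x) ^ 2) - a * s ^ 2 := by
    rw [hA, hB]; ring
  refine ⟨hmain, ?_, ?_⟩
  · have : 0 ≤ a * s ^ 2 := by positivity
    rw [hmain]; linarith
  · rw [hmain]
    constructor
    · intro h hs0
      rw [hs0] at h; simp at h; exact lt_irrefl _ h
    · intro hs0
      have : 0 < a * s ^ 2 := by positivity
      linarith
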